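/- Let G be a group, S ⊆ G a nonempty finite subset, H a complex Hilbert space, and π : G → U(H) a unitary representation (a group homomorphism into the group of linear isometric bijections of H). Let T = (card S)⁻¹ · Σ_{g ∈ S} π(g), a bounded linear operator on H. Then: (a) for every ξ ∈ H with ‖ξ‖ = 1 there exists g ∈ S with ‖π(g)ξ − ξ‖ ≥ 1 − ‖T‖; (b) if moreover 1 ∈ S and S = S⁻¹, then ‖T‖ ≤ 1 − κ²/(16 · card S), where κ = inf { sup_{g ∈ S} ‖π(g)ξ − ξ‖ : ξ ∈ H, ‖ξ‖ = 1 } is the Kazhdan constant of π relative to S. -/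

import Mathlib

set_option maxHeartbeats 1000000 in
/-- **Convolution operators and Kazhdan constants.** Let `π` be a unitary representation of
`G` on a complex Hilbert space `H`, `S ⊆ G` a nonempty finite subset, and
`T = (card S)⁻¹ Σ_{g ∈ S} π(g)` the averaging operator. Then (a) every unit vector `ξ`
admits `g ∈ S` with `‖π(g)ξ − ξ‖ ≥ 1 − ‖T‖`; and (b) if `1 ∈ S` and `S = S⁻¹`, then
`‖T‖ ≤ 1 − κ²/(16 card S)` where `κ` is the Kazhdan constant of `π` relative to `S`. -/
theorem averaging_operator_kazhdan
    {G : Type*} [Group G] {H : Type*} [NormedAddCommGroup H] [InnerProductSpace ℂ H]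
    [CompleteSpace H]
    (π : G →* (H ≃ₗᵢ[ℂ] H)) (S : Finset G) (hS : S.Nonempty)
    (T : H →L[ℂ] H)
    (hT : T = ((S.card : ℂ))⁻¹ •
      ∑ g ∈ S, ((π g).toLinearIsometry.toContinuousLinearMap))
    (κ : ℝ)
    (hκ : κ = sInf {x : ℝ | ∃ ξ : H, ‖ξ‖ = 1 ∧
      x = sSup {y : ℝ | ∃ g ∈ S, y = ‖π g ξ - ξ‖}}) :
    (∀ ξ : H, ‖ξ‖ = 1 → ∃ g ∈ S, 1 - ‖T‖ ≤ ‖π g ξ - ξ‖) ∧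
    ((1 : G) ∈ S → (∀ g : G, g ∈ S ↔ g⁻¹ ∈ S) →
      ‖T‖ ≤ 1 - κ ^ 2 / (16 * S.card)) := by
  classical
  have hcardn : 0 < S.card := Finset.card_pos.2 hS
  have hcard0 : 0 < (S.card : ℝ) := by exact_mod_cast hcardn
  have hcardC : (S.card : ℂ) ≠ 0 := Nat.cast_ne_zero.2 hcardn.ne'
  have hTapp : ∀ x : H, T x = (S.card : ℂ)⁻¹ • ∑ g ∈ S, π g x := by
    intro x
    rw [hT]
    simp [ContinuousLinearMap.sum_apply]
  have hnormc : ‖((S.card : ℂ))⁻¹‖ = (S.card : ℝ)⁻¹ := by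
    rw [norm_inv]
    norm_num
  -- norm of π g x
  have hiso : ∀ (g : G) (x : H), ‖π g x‖ = ‖x‖ := fun g x => (π g).norm_map x
  -- Part (a)
  have parta : ∀ ξ : H, ‖ξ‖ = 1 → ∃ g ∈ S, 1 - ‖T‖ ≤ ‖π g ξ - ξ‖ := by
    intro ξ hξ
    obtain ⟨g₀, hg₀, hmax⟩ := S.exists_max_image (fun g => ‖π g ξ - ξ‖) hS
    refine ⟨g₀, hg₀, ?_⟩
    have hsub : T ξ - ξ = (S.card : ℂ)⁻¹ • ∑ g ∈ S, (π g ξ - ξ) := by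
      rw [Finset.sum_sub_distrib, smul_sub, ← hTapp]
      congr 1
      rw [Finset.sum_const, ← Nat.cast_smul_eq_nsmul ℂ, smul_smul,
        inv_mul_cancel₀ hcardC, one_smul]
    have h1 : ‖T ξ - ξ‖ ≤ ‖π g₀ ξ - ξ‖ := by
      rw [hsub, norm_smul, hnormc]
      have : ‖∑ g ∈ S, (π g ξ - ξ)‖ ≤ (S.card : ℝ) * ‖π g₀ ξ - ξ‖ := by
        calc ‖∑ g ∈ S, (π g ξ - ξ)‖ ≤ ∑ g ∈ S, ‖π g ξ - ξ‖ := norm_sum_le _ _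
        _ ≤ ∑ _g ∈ S, ‖π g₀ ξ - ξ‖ := Finset.sum_le_sum fun g hg => hmax g hg
        _ = (S.card : ℝ) * ‖π g₀ ξ - ξ‖ := by rw [Finset.sum_const, nsmul_eq_mul]
      calc (S.card : ℝ)⁻¹ * ‖∑ g ∈ S, (π g ξ - ξ)‖
          ≤ (S.card : ℝ)⁻¹ * ((S.card : ℝ) * ‖π g₀ ξ - ξ‖) := by
            exact mul_le_mul_of_nonneg_left this (by positivity)
        _ = ‖π g₀ ξ - ξ‖ := by field_simp
    have h2 : ‖T ξ‖ ≤ ‖T‖ := by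
      calc ‖T ξ‖ ≤ ‖T‖ * ‖ξ‖ := T.le_opNorm ξ
      _ = ‖T‖ := by rw [hξ, mul_one]
    have h3 : (1 : ℝ) ≤ ‖T ξ‖ + ‖T ξ - ξ‖ := by
      have h4 : T ξ + (ξ - T ξ) = ξ := by abel
      have h5 := norm_add_le (T ξ) (ξ - T ξ)
      rw [h4, hξ, norm_sub_rev] at h5
      exact h5
    linarith
  refine ⟨parta, ?_⟩
  intro h1S hSymm
  -- basic facts about κ
  set A : Set ℝ := {x : ℝ | ∃ ξ : H, ‖ξ‖ = 1 ∧
      x = sSup {y : ℝ | ∃ g ∈ S, y = ‖π g ξ - ξ‖}} with hA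
  have hYfin : ∀ ξ : H, ({y : ℝ | ∃ g ∈ S, y = ‖π g ξ - ξ‖}).Finite := by
    intro ξ
    have : {y : ℝ | ∃ g ∈ S, y = ‖π g ξ - ξ‖} = (fun g => ‖π g ξ - ξ‖) '' S := by
      ext y; simp [eq_comm]
    rw [this]
    exact S.finite_toSet.image _
  have hYne : ∀ ξ : H, ({y : ℝ | ∃ g ∈ S, y = ‖π g ξ - ξ‖}).Nonempty := by
    intro ξ
    obtain ⟨g, hg⟩ := hS
    exact ⟨‖π g ξ - ξ‖, g, hg, rfl⟩
  have hAnonneg : ∀ x ∈ A, 0 ≤ x := by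
    rintro x ⟨ξ, hξ, rfl⟩
    obtain ⟨g, hg, hgy⟩ := (hYne ξ).csSup_mem (hYfin ξ)
    rw [hgy]
    positivity
  have hbdd : BddBelow A := ⟨0, hAnonneg⟩
  have hκ0 : 0 ≤ κ := by
    rw [hκ]
    rcases Set.eq_empty_or_nonempty A with h | h
    · rw [h, Real.sInf_empty]
    · exact le_csInf h hAnonneg
  -- norm of T is at most 1
  have hTle1 : ∀ x : H, ‖T x‖ ≤ ‖x‖ := by
    intro x
    rw [hTapp, norm_smul, hnormc]
    calc (S.card : ℝ)⁻¹ * ‖∑ g ∈ S, π g x‖ ≤ (S.card : ℝ)⁻¹ * ((S.card : ℝ) * ‖x‖) := by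
          refine mul_le_mul_of_nonneg_left ?_ (inv_nonneg.2 hcard0.le)
          calc ‖∑ g ∈ S, π g x‖ ≤ ∑ g ∈ S, ‖π g x‖ := norm_sum_le _ _
          _ = (S.card : ℝ) * ‖x‖ := by
              simp only [hiso, Finset.sum_const, nsmul_eq_mul]
      _ = ‖x‖ := by rw [← mul_assoc, inv_mul_cancel₀ hcard0.ne', one_mul]
  rcases eq_or_lt_of_le hκ0 with hκz | hκpos
  · -- κ = 0
    have : κ ^ 2 / (16 * (S.card : ℝ)) = 0 := by rw [← hκz]; simp
    rw [this, sub_zero]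
    exact T.opNorm_le_bound zero_le_one (by simpa using hTle1)
  -- κ > 0 : then A is nonempty and κ ≤ 2
  have hAne : A.Nonempty := by
    by_contra h
    rw [Set.not_nonempty_iff_eq_empty] at h
    rw [hκ, h, Real.sInf_empty] at hκpos
    exact lt_irrefl _ hκpos
  have hκ2 : κ ≤ 2 := by
    obtain ⟨x, hx⟩ := hAne
    have h1 : κ ≤ x := hκ ▸ csInf_le hbdd hx
    obtain ⟨ξ, hξ, rfl⟩ := hx
    obtain ⟨g, hg, hgy⟩ := (hYne ξ).csSup_mem (hYfin ξ)
    have : ‖π g ξ - ξ‖ ≤ 2 := by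
      calc ‖π g ξ - ξ‖ ≤ ‖π g ξ‖ + ‖ξ‖ := norm_sub_le _ _
      _ = 2 := by rw [hiso, hξ]; norm_num
    linarith [hgy ▸ this]
  -- main bound for unit vectors
  have hge1 : (1:ℝ) ≤ (S.card : ℝ) := by exact_mod_cast hcardn
  have hC0 : (0:ℝ) ≤ 1 - κ ^ 2 / (16 * (S.card : ℝ)) := by
    have h16 : κ ^ 2 ≤ 4 := by nlinarith
    have h17 : κ ^ 2 / (16 * (S.card : ℝ)) ≤ 1 := by
      rw [div_le_one (mul_pos (by norm_num) hcard0)]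
      nlinarith
    linarith
  have key : ∀ ξ : H, ‖ξ‖ = 1 → ‖T ξ‖ ≤ 1 - κ ^ 2 / (16 * (S.card : ℝ)) := by
    intro ξ hξ
    -- find g₀ with ‖π g₀ ξ - ξ‖ ≥ κ
    obtain ⟨g₀, hg₀, hgy⟩ := (hYne ξ).csSup_mem (hYfin ξ)
    have hκle : κ ≤ ‖π g₀ ξ - ξ‖ := by
      have : κ ≤ sSup {y : ℝ | ∃ g ∈ S, y = ‖π g ξ - ξ‖} :=
        hκ ▸ csInf_le hbdd ⟨ξ, hξ, rfl⟩
      linarith [hgy ▸ this]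
    have hg₀ne1 : g₀ ≠ 1 := by
      intro h
      rw [h] at hκle
      simp at hκle
      linarith
    -- parallelogram
    have hpar := parallelogram_law_with_norm ℂ (π g₀ ξ) ξ
    rw [hiso, hξ] at hpar
    have hsum2 : ‖π g₀ ξ + ξ‖ ≤ 2 - κ ^ 2 / 4 := by
      have hsq : ‖π g₀ ξ + ξ‖ ^ 2 ≤ 4 - κ ^ 2 := by
        nlinarith [mul_self_le_mul_self hκ0 hκle]
      have hc1 : (1:ℝ) ≤ 2 - κ ^ 2 / 4 := by nlinarith
      nlinarith [norm_nonneg (π g₀ ξ + ξ), sq_nonneg (κ ^ 2)]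
    -- split the sum
    have h1mem : (1:G) ∈ S.erase g₀ := Finset.mem_erase.2 ⟨(Ne.symm hg₀ne1), h1S⟩
    have hsplit : ∑ g ∈ S, π g ξ =
        π g₀ ξ + (ξ + ∑ g ∈ (S.erase g₀).erase 1, π g ξ) := by
      rw [← Finset.add_sum_erase _ _ hg₀]
      congr 1
      rw [← Finset.add_sum_erase _ _ h1mem]
      simp
    have hrest : ‖∑ g ∈ (S.erase g₀).erase 1, π g ξ‖ ≤ (S.card : ℝ) - 2 := by
      calc ‖∑ g ∈ (S.erase g₀).erase 1, π g ξ‖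
          ≤ ∑ g ∈ (S.erase g₀).erase 1, ‖π g ξ‖ := norm_sum_le _ _
        _ = (((S.erase g₀).erase 1).card : ℝ) := by
            simp [hiso, hξ]
        _ = (S.card : ℝ) - 2 := by
            have h2 : 2 ≤ S.card := Finset.one_lt_card.2 ⟨g₀, hg₀, 1, h1S, hg₀ne1⟩
            have hc : ((S.erase g₀).erase 1).card = S.card - 2 := by
              rw [Finset.card_erase_of_mem h1mem, Finset.card_erase_of_mem hg₀]
              omega
            rw [hc, Nat.cast_sub h2]
            norm_num
    have htotal : ‖∑ g ∈ S, π g ξ‖ ≤ (S.card : ℝ) - κ ^ 2 / 4 := by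
      rw [hsplit]
      calc ‖π g₀ ξ + (ξ + ∑ g ∈ (S.erase g₀).erase 1, π g ξ)‖
          ≤ ‖π g₀ ξ + ξ‖ + ‖∑ g ∈ (S.erase g₀).erase 1, π g ξ‖ := by
            rw [← add_assoc]
            exact norm_add_le _ _
        _ ≤ (2 - κ ^ 2 / 4) + ((S.card : ℝ) - 2) := add_le_add hsum2 hrest
        _ = (S.card : ℝ) - κ ^ 2 / 4 := by ring
    rw [hTapp, norm_smul, hnormc]
    calc (S.card : ℝ)⁻¹ * ‖∑ g ∈ S, π g ξ‖
        ≤ (S.card : ℝ)⁻¹ * ((S.card : ℝ) - κ ^ 2 / 4) :=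
          mul_le_mul_of_nonneg_left htotal (inv_nonneg.2 hcard0.le)
      _ = 1 - κ ^ 2 / (4 * (S.card : ℝ)) := by rw [mul_sub, inv_mul_cancel₀ hcard0.ne']; ring
      _ ≤ 1 - κ ^ 2 / (16 * (S.card : ℝ)) := by
          have : κ ^ 2 / (16 * (S.card : ℝ)) ≤ κ ^ 2 / (4 * (S.card : ℝ)) := by
            apply div_le_div_of_nonneg_left (sq_nonneg κ) (by linarith) (by linarith)
          linarith
  -- conclude
  refine T.opNorm_le_bound hC0 ?_
  intro x
  rcases eq_or_ne x 0 with rfl | hx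
  · simp
  · have hxn : (0:ℝ) < ‖x‖ := norm_pos_iff.2 hx
    have hunit : ‖((‖x‖⁻¹ : ℝ) : ℂ) • x‖ = 1 := by
      rw [norm_smul, Complex.norm_real, Real.norm_eq_abs, abs_of_pos (by positivity),
        inv_mul_cancel₀ hxn.ne']
    have hkey := key (((‖x‖⁻¹ : ℝ) : ℂ) • x) hunit
    have hTs : T (((‖x‖⁻¹ : ℝ) : ℂ) • x) = ((‖x‖⁻¹ : ℝ) : ℂ) • T x :=
      map_smul T _ _
    rw [hTs, norm_smul, Complex.norm_real, Real.norm_eq_abs,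
      abs_of_pos (by positivity : (0:ℝ) < ‖x‖⁻¹)] at hkey
    calc ‖T x‖ = ‖x‖ * (‖x‖⁻¹ * ‖T x‖) := by field_simp
      _ ≤ ‖x‖ * (1 - κ ^ 2 / (16 * (S.card : ℝ))) :=
          mul_le_mul_of_nonneg_left hkey hxn.le
      _ = (1 - κ ^ 2 / (16 * (S.card : ℝ))) * ‖x‖ := by ring
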